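/- Standard LCS recurrence: for nonempty lists A = A' ++ [x] and B = B' ++ [y], if x = y then LLCS(A,B) = LLCS(A',B') + 1, and if x ≠ y then LLCS(A,B) = max(LLCS(A',B), LLCS(A,B')). -/

import Mathlib

/-- Maximum length of a common sublist (LCS length) of `X` and `Y`. -/
def LLCS {σ : Type} [DecidableEq σ] (X Y : List σ) : ℕ :=
  ((X.sublists.filter (fun C => decide (C.Sublist Y))).map List.length).foldr max 0

/-- `I` is an appearance (embedding witness) of `P` in `A`: a strictly increasing
list of (0-based) indices realizing `P` as a sublist of `A`. -/
def IsApp {σ : Type} (A P : List σ) (I : List ℕ) : Prop :=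
  I.Chain' (· < ·) ∧ I.length = P.length ∧ ∀ t, t < I.length → A[I.getD t 0]? = P[t]?

/-- A greedy (compact) appearance: each next index is the least possible one. -/
def IsGreedy {σ : Type} (A P : List σ) (I : List ℕ) : Prop :=
  IsApp A P I ∧ ∀ t, t + 1 < I.length → ∀ k, I.getD t 0 < k → A[k]? = P[t+1]? →
    I.getD (t+1) 0 ≤ k

private lemma le_foldr_max {a : ℕ} {l : List ℕ} (h : a ∈ l) : a ≤ l.foldr max 0 := by
  induction l with
  | nil => simp at h
  | cons b t ih =>
    rcases List.mem_cons.1 h with rfl | h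
    · exact le_max_left _ _
    · exact (ih h).trans (le_max_right _ _)

private lemma foldr_max_le {n : ℕ} {l : List ℕ} (h : ∀ a ∈ l, a ≤ n) : l.foldr max 0 ≤ n := by
  induction l with
  | nil => simp
  | cons b t ih =>
    simp only [List.foldr_cons]
    exact max_le (h b (by simp)) (ih fun a ha => h a (List.mem_cons_of_mem _ ha))

private lemma foldr_max_mem (l : List ℕ) : l.foldr max 0 ∈ l ∨ l.foldr max 0 = 0 := by
  induction l with
  | nil => simp
  | cons b t ih =>
    simp only [List.foldr_cons]
    rcases le_or_gt (t.foldr max 0) b with h | h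
    · left; simp [max_eq_left h]
    · rw [max_eq_right h.le]
      rcases ih with h' | h'
      · exact Or.inl (List.mem_cons_of_mem _ h')
      · exact Or.inr h'

private lemma mem_llcs_list {σ : Type} [DecidableEq σ] {X Y : List σ} {n : ℕ} :
    n ∈ ((X.sublists.filter (fun C => decide (C.Sublist Y))).map List.length) ↔
      ∃ C : List σ, C.Sublist X ∧ C.Sublist Y ∧ C.length = n := by
  simp [List.mem_filter, List.mem_sublists, and_assoc]

private lemma le_LLCS {σ : Type} [DecidableEq σ] {X Y C : List σ}
    (hX : C.Sublist X) (hY : C.Sublist Y) : C.length ≤ LLCS X Y :=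
  le_foldr_max (mem_llcs_list.2 ⟨C, hX, hY, rfl⟩)

private lemma LLCS_le {σ : Type} [DecidableEq σ] {X Y : List σ} {n : ℕ}
    (h : ∀ C : List σ, C.Sublist X → C.Sublist Y → C.length ≤ n) : LLCS X Y ≤ n := by
  refine foldr_max_le fun a ha => ?_
  obtain ⟨C, hX, hY, rfl⟩ := mem_llcs_list.1 ha
  exact h C hX hY

private lemma exists_LLCS {σ : Type} [DecidableEq σ] (X Y : List σ) :
    ∃ C : List σ, C.Sublist X ∧ C.Sublist Y ∧ C.length = LLCS X Y := by
  have hm := foldr_max_mem ((X.sublists.filter (fun C : List σ => decide (C.Sublist Y))).map List.length)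
  rcases hm with h | h
  · exact mem_llcs_list.1 h
  · exact ⟨[], List.nil_sublist _, List.nil_sublist _, by simpa [LLCS] using h.symm⟩

private lemma sublist_concat_iff {σ : Type} {l l' : List σ} {a : σ} :
    List.Sublist l (l' ++ [a]) ↔ List.Sublist l l' ∨ ∃ r, l = r ++ [a] ∧ List.Sublist r l' := by
  constructor
  · intro h
    have h' := h.reverse
    simp only [List.reverse_append, List.reverse_cons, List.reverse_nil, List.nil_append,
      List.singleton_append] at h'
    rcases List.sublist_cons_iff.1 h' with h'' | ⟨r, hr, hr'⟩
    · left; simpa using h''.reverse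
    · right
      refine ⟨r.reverse, ?_, by simpa using hr'.reverse⟩
      have := congrArg List.reverse hr
      simpa using this
  · rintro (h | ⟨r, rfl, h⟩)
    · exact h.trans (List.sublist_append_left _ _)
    · exact h.append (List.Sublist.refl _)

theorem stmt10 {σ : Type} [DecidableEq σ] (A' B' : List σ) (x y : σ) :
    (x = y → LLCS (A' ++ [x]) (B' ++ [y]) = LLCS A' B' + 1) ∧
    (x ≠ y → LLCS (A' ++ [x]) (B' ++ [y]) =
      max (LLCS A' (B' ++ [y])) (LLCS (A' ++ [x]) B')) := by
  constructor
  · rintro rfl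
    apply le_antisymm
    · apply LLCS_le
      intro C hA hB
      rcases sublist_concat_iff.1 hA with hA' | ⟨r, rfl, hr⟩
      · rcases sublist_concat_iff.1 hB with hB' | ⟨s, rfl, hs⟩
        · exact (le_LLCS hA' hB').trans (Nat.le_succ _)
        · have hsA : s.Sublist A' := (List.sublist_append_left s [x]).trans hA'
          simpa using Nat.succ_le_succ (le_LLCS hsA hs)
      · rcases sublist_concat_iff.1 hB with hB' | ⟨s, hseq, hs⟩
        · have hr' : r.Sublist B' := (List.sublist_append_left r [x]).trans hB'
          simpa using Nat.succ_le_succ (le_LLCS hr hr')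
        · have : r = s := by
            have := List.append_inj' hseq rfl
            exact this.1
          subst this
          simpa using Nat.succ_le_succ (le_LLCS hr hs)
    · obtain ⟨C, hA, hB, hlen⟩ := exists_LLCS A' B'
      have : (C ++ [x]).length ≤ LLCS (A' ++ [x]) (B' ++ [x]) :=
        le_LLCS (hA.append (List.Sublist.refl _)) (hB.append (List.Sublist.refl _))
      simpa [hlen] using this
  · intro hxy
    apply le_antisymm
    · apply LLCS_le
      intro C hA hB
      rcases sublist_concat_iff.1 hA with hA' | ⟨r, rfl, hr⟩
      · exact (le_LLCS hA' hB).trans (le_max_left _ _)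
      · rcases sublist_concat_iff.1 hB with hB' | ⟨s, hseq, hs⟩
        · exact (le_LLCS (hr.append (List.Sublist.refl _)) hB').trans (le_max_right _ _)
        · exfalso
          have := List.append_inj' hseq rfl
          exact hxy (by simpa using this.2)
    · apply max_le
      · obtain ⟨C, hA, hB, hlen⟩ := exists_LLCS A' (B' ++ [y])
        rw [← hlen]
        exact le_LLCS (hA.trans (List.sublist_append_left _ _)) hB
      · obtain ⟨C, hA, hB, hlen⟩ := exists_LLCS (A' ++ [x]) B'
        rw [← hlen]
        exact le_LLCS hA (hB.trans (List.sublist_append_left _ _))
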